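/- Let L ≥ 1 and let T be a tree with maximal element P_T = I_T × ω_T. (i) If T is convex, then for any ξ ∈ ω_T the enlarged tree T^{(L)} is convex and has a unique maximal element, namely the unique bitile P ∈ T^{(L)} with I_P = I_T. (ii) The set ⋃_{P ∈ T^{(L)}} P, and hence the phase plane projection Π_{T^{(L)}}, does not depend on the choice of the frequency ξ ∈ ω_T. -/
import Mathlib


open MeasureTheory Set ENNReal NNReal

noncomputable section

namespace Quartile

/-- The Walsh functions on `[0,1)` (extended by zero), in Walsh-Paley order,
defined by the recursion `W_{2l} = W_l(2x) + W_l(2x-1)`, `W_{2l+1} = W_l(2x) - W_l(2x-1)`. -/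
def walsh (n : ℕ) (x : ℝ) : ℝ :=
  if h : n = 0 then (if 0 ≤ x ∧ x < 1 then 1 else 0)
  else if n % 2 = 0 then walsh (n / 2) (2 * x) + walsh (n / 2) (2 * x - 1)
  else walsh (n / 2) (2 * x) - walsh (n / 2) (2 * x - 1)
termination_by n
decreasing_by
  all_goals exact Nat.div_lt_self (Nat.pos_of_ne_zero h) one_lt_two

/-- The dyadic interval `[2^k n, 2^k (n+1)) ⊆ [0,∞)`. -/
def dyadicI (k : ℤ) (n : ℕ) : Set ℝ := Ico ((2:ℝ)^k * n) ((2:ℝ)^k * (n+1))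

/-- A tile: the dyadic rectangle `[2^k n, 2^k(n+1)) × [2^{-k} l, 2^{-k}(l+1))` of area one. -/
structure Tile where
  k : ℤ
  n : ℕ
  l : ℕ

namespace Tile

/-- The time interval `I_p` of a tile. -/
def timeI (p : Tile) : Set ℝ := Ico ((2:ℝ)^p.k * p.n) ((2:ℝ)^p.k * (p.n+1))

/-- The frequency interval `ω_p` of a tile. -/
def freqI (p : Tile) : Set ℝ := Ico ((2:ℝ)^(-p.k) * p.l) ((2:ℝ)^(-p.k) * (p.l+1))

/-- The tile as a subset of the phase plane. -/
def toSet (p : Tile) : Set (ℝ × ℝ) := p.timeI ×ˢ p.freqI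

/-- The Walsh wave packet `w_p` of a tile, `L²`-normalized. -/
def wp (p : Tile) (x : ℝ) : ℝ :=
  Real.sqrt ((2:ℝ)^(-p.k)) * walsh p.l ((2:ℝ)^(-p.k) * x - p.n)

end Tile

/-- The order on dyadic rectangles: `p ≤ q` iff `I_p ⊆ I_q` and `ω_q ⊆ ω_p`, for tiles. -/
def tileLE (p q : Tile) : Prop := p.timeI ⊆ q.timeI ∧ q.freqI ⊆ p.freqI

/-- The inner product `⟨f, w_p⟩` of a function with a (real valued) wave packet. -/
def coef (f : ℝ → ℂ) (p : Tile) : ℂ := ∫ x, f x * (p.wp x : ℂ)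

/-- The rank one projection `Π_p f = ⟨f, w_p⟩ w_p` associated to a single tile. -/
def projT (p : Tile) (f : ℝ → ℂ) (x : ℝ) : ℂ := coef f p * (p.wp x : ℂ)

/-- The projection associated to a collection of (pairwise disjoint) tiles. -/
def projSet (𝔭 : Set Tile) (f : ℝ → ℂ) (x : ℝ) : ℂ := ∑' p : 𝔭, projT p f x

/-- The maximal tiles contained in a subset `S` of the phase plane; when `S` is a disjoint
union of tiles (of the kind appearing below) these form the canonical tiling of `S`. -/
def maxTiles (S : Set (ℝ × ℝ)) : Set Tile :=
  {p | p.toSet ⊆ S ∧ ∀ q : Tile, q.toSet ⊆ S → tileLE p q → q = p}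

/-- The phase plane projection `Π_S` associated to a subset `S` of the phase plane,
computed with the canonical tiling of `S` by maximal tiles (the projection is independent
of the chosen tiling). -/
def piProj (S : Set (ℝ × ℝ)) (f : ℝ → ℂ) (x : ℝ) : ℂ := projSet (maxTiles S) f x

/-- A bitile: the dyadic rectangle `[2^k n, 2^k(n+1)) × [2^{1-k} l, 2^{1-k}(l+1))` of area two. -/
structure Bitile where
  k : ℤ
  n : ℕ
  l : ℕ

namespace Bitile

/-- The time interval `I_P` of a bitile. -/
def timeI (P : Bitile) : Set ℝ := Ico ((2:ℝ)^P.k * P.n) ((2:ℝ)^P.k * (P.n+1))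

/-- The frequency interval `ω_P` of a bitile. -/
def freqI (P : Bitile) : Set ℝ := Ico ((2:ℝ)^(1-P.k) * P.l) ((2:ℝ)^(1-P.k) * (P.l+1))

/-- The bitile as a subset of the phase plane. -/
def toSet (P : Bitile) : Set (ℝ × ℝ) := P.timeI ×ˢ P.freqI

/-- The lower tile `P_d` of a bitile. -/
def d (P : Bitile) : Tile := ⟨P.k, P.n, 2*P.l⟩

/-- The upper tile `P_u` of a bitile. -/
def u (P : Bitile) : Tile := ⟨P.k, P.n, 2*P.l+1⟩

/-- The left tile of a bitile. -/
def left (P : Bitile) : Tile := ⟨P.k-1, 2*P.n, P.l⟩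

/-- The right tile of a bitile. -/
def right (P : Bitile) : Tile := ⟨P.k-1, 2*P.n+1, P.l⟩

/-- The `L^∞`-normalized wave packet `φ_{P_d} = |I_P|^{1/2} w_{P_d}`. -/
def phid (P : Bitile) (x : ℝ) : ℝ := Real.sqrt ((2:ℝ)^P.k) * P.d.wp x

end Bitile

/-- The order on dyadic rectangles, for bitiles. -/
def bitileLE (P Q : Bitile) : Prop := P.timeI ⊆ Q.timeI ∧ Q.freqI ⊆ P.freqI

/-- Strict order on bitiles. -/
def bitileLT (P Q : Bitile) : Prop := bitileLE P Q ∧ P ≠ Q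

/-- A collection of bitiles is convex if together with `P₁ < P < P₂` for `P₁, P₂` in the
collection it contains `P`. -/
def IsConvex (PP : Set Bitile) : Prop :=
  ∀ P1 P2 P : Bitile, P1 ∈ PP → P2 ∈ PP → bitileLT P1 P → bitileLT P P2 → P ∈ PP

/-- A tree: a collection of bitiles with a (unique) maximal element `P_T = I_T × ω_T`. -/
structure Tree where
  carrier : Set Bitile
  top : Bitile
  top_mem : top ∈ carrier
  le_top : ∀ P ∈ carrier, bitileLE P top

namespace Tree

/-- `T_d`: those bitiles of the tree whose lower tile frequency interval contains `ω_T`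
(in the paper's notation, `P_T ≤ P_d`). -/
def Td (T : Tree) : Set Bitile := {P | P ∈ T.carrier ∧ T.top.freqI ⊆ P.d.freqI}

/-- `T_u`: those bitiles of the tree whose upper tile frequency interval contains `ω_T`
(in the paper's notation, `P_T ≤ P_u`). -/
def Tu (T : Tree) : Set Bitile := {P | P ∈ T.carrier ∧ T.top.freqI ⊆ P.u.freqI}

/-- The region `⋃_{P ∈ T} P` of the phase plane occupied by a tree. -/
def unionSet (T : Tree) : Set (ℝ × ℝ) := ⋃ P ∈ T.carrier, P.toSet

/-- The phase plane projection `Π_T` of a (convex) tree. -/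
def proj (T : Tree) (f : ℝ → ℂ) : ℝ → ℂ := piProj T.unionSet f

end Tree

/-- The vertical dilation `2^L S` of a subset of the phase plane. -/
def dilate (L : ℕ) (S : Set (ℝ × ℝ)) : Set (ℝ × ℝ) := (fun q => (q.1, (2:ℝ)^L * q.2)) '' S

/-- The enlarged tree `T^{(L)}` with respect to a frequency `ξ ∈ ω_T`: all bitiles `P` with
`2^L ξ ∈ ω_P` contained in a rectangle `2^L P'` with `P' ∈ T`. -/
def Tree.enlarged (L : ℕ) (T : Tree) (ξ : ℝ) : Set Bitile :=
  {P | (2:ℝ)^L * ξ ∈ P.freqI ∧ ∃ P' ∈ T.carrier, P.toSet ⊆ dilate L P'.toSet}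

/-- The region of the phase plane occupied by the enlarged tree `T^{(L)}`. -/
def Tree.enlargedSet (L : ℕ) (T : Tree) (ξ : ℝ) : Set (ℝ × ℝ) :=
  ⋃ P ∈ T.enlarged L ξ, P.toSet

/-- The left endpoint of `ω_T`, a canonical choice of `ξ ∈ ω_T`. -/
def Tree.xiTop (T : Tree) : ℝ := (2:ℝ)^(1-T.top.k) * T.top.l

/-- The phase plane projection `Π_{T^{(L)}}` of the enlarged tree (independent of the
choice of `ξ ∈ ω_T`; we use the canonical choice).  For `L = 0` this is `Π_T`. -/
def Tree.projL (L : ℕ) (T : Tree) (f : ℝ → ℂ) : ℝ → ℂ := piProj (T.enlargedSet L T.xiTop) f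

/-- `size^{(L)}(PP, f) = sup |I_T|^{-1/2} ‖Π_{T^{(L)}} f‖₂`, the supremum over convex trees
`T ⊆ PP`.  For `L = 0` this is the plain `size(PP, f)`. -/
def size (L : ℕ) (PP : Set Bitile) (f : ℝ → ℂ) : ℝ≥0∞ :=
  ⨆ (T : Tree) (_ : T.carrier ⊆ PP ∧ IsConvex T.carrier),
    (ENNReal.ofReal (Real.sqrt ((2:ℝ)^T.top.k)))⁻¹ * eLpNorm (T.projL L f) 2 volume

/-- The quartile form `Λ_{PP}` restricted to a collection `PP` of bitiles. -/
def quartileFormOn (L : ℕ) (PP : Set Bitile) (f1 f2 f3 : ℝ → ℂ) : ℂ :=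
  ∫ x, ∑' P : PP, (P.1.phid x : ℂ) * projT P.1.u f1 x *
      piProj (dilate L P.1.d.toSet) f2 x * piProj (dilate L P.1.d.toSet) f3 x

/-- The bitiles contained in the strip `ℝ₊ × [0, 2^N)`. -/
def stripBitiles (N : ℕ) : Set Bitile := {P | P.freqI ⊆ Ico (0:ℝ) ((2:ℝ)^N)}

/-- The quartile form `Λ_L` (with frequency truncation parameter `N`). -/
def quartileForm (L N : ℕ) (f1 f2 f3 : ℝ → ℂ) : ℂ :=
  quartileFormOn L (stripBitiles N) f1 f2 f3

/-- The quartile form perturbed by a bounded sequence of coefficients `c_P`. -/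
def quartileFormC (L N : ℕ) (c : Bitile → ℂ) (f1 f2 f3 : ℝ → ℂ) : ℂ :=
  ∫ x, ∑' P : stripBitiles N, c P.1 * (P.1.phid x : ℂ) * projT P.1.u f1 x *
      piProj (dilate L P.1.d.toSet) f2 x * piProj (dilate L P.1.d.toSet) f3 x

/-- The counting function `Σ_{T ∈ 𝕋} 1_{I_T}` of a collection of trees. -/
def countingFn (𝕋 : Set Tree) (x : ℝ) : ℝ≥0∞ :=
  ∑' T : 𝕋, (T.1.top.timeI).indicator (fun _ => (1:ℝ≥0∞)) x

/-- The average of an `ℝ≥0∞`-valued function over a set. -/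
def avgOn (I : Set ℝ) (g : ℝ → ℝ≥0∞) : ℝ≥0∞ := (volume I)⁻¹ * ∫⁻ x in I, g x

/-- The dyadic BMO norm on `[0,∞)` of an `ℝ≥0∞`-valued function. -/
def dyadicBMO (g : ℝ → ℝ≥0∞) : ℝ≥0∞ :=
  ⨆ (k : ℤ) (n : ℕ), avgOn (dyadicI k n)
    (fun x => (g x - avgOn (dyadicI k n) g) + (avgOn (dyadicI k n) g - g x))

/-- The dyadic Hardy-Littlewood maximal function on `[0,∞)`. -/
def dyadicMax (f : ℝ → ℂ) (x : ℝ) : ℝ≥0∞ :=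
  ⨆ (k : ℤ) (n : ℕ) (_ : x ∈ dyadicI k n),
    (volume (dyadicI k n))⁻¹ * ∫⁻ y in dyadicI k n, ‖f y‖₊

/-- The dyadic interval of length `2^j` containing `y ≥ 0`. -/
def freqInterval (j : ℤ) (y : ℝ) : Set ℝ :=
  Ico ((2:ℝ)^j * ⌊y / (2:ℝ)^j⌋) ((2:ℝ)^j * (⌊y / (2:ℝ)^j⌋ + 1))

/-- The projection `Π_l := Π_{I_T × ω_l}`, where `ω_l` is the dyadic interval of
length `2^l` containing the frequency `y`. -/
def PiScale (T : Tree) (j : ℤ) (y : ℝ) (f : ℝ → ℂ) : ℝ → ℂ :=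
  piProj (T.top.timeI ×ˢ freqInterval j y) f

/-- The difference projection `Π_l^Δ = Π_l - Π_{l-1}`. -/
def PiDelta (T : Tree) (j : ℤ) (y : ℝ) (f : ℝ → ℂ) (x : ℝ) : ℂ :=
  PiScale T j y f x - PiScale T (j-1) y f x


lemma two_zpow_pos (k : ℤ) : (0:ℝ) < 2^k := zpow_pos (by norm_num) k

lemma dyadic_lt (k : ℤ) (n : ℕ) : (2:ℝ)^k * n < (2:ℝ)^k * (n+1) := by
  have := two_zpow_pos k; nlinarith

lemma left_mem_dy (k : ℤ) (n : ℕ) :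
    (2:ℝ)^k * n ∈ Ico ((2:ℝ)^k * n) ((2:ℝ)^k * (n+1)) := ⟨le_refl _, dyadic_lt k n⟩

lemma dy_nonneg {k : ℤ} {n : ℕ} {x : ℝ}
    (h : x ∈ Ico ((2:ℝ)^k * n) ((2:ℝ)^k * (n+1))) : 0 ≤ x :=
  le_trans (by positivity) h.1

lemma dy_subset {k k' : ℤ} {n n' : ℕ} {x : ℝ} (hk : k ≤ k')
    (h : x ∈ Ico ((2:ℝ)^k * n) ((2:ℝ)^k * (n+1)))
    (h' : x ∈ Ico ((2:ℝ)^k' * n') ((2:ℝ)^k' * (n'+1))) :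
    Ico ((2:ℝ)^k * n) ((2:ℝ)^k * (n+1)) ⊆ Ico ((2:ℝ)^k' * n') ((2:ℝ)^k' * (n'+1)) := by
  obtain ⟨h1, h2⟩ := h
  obtain ⟨h1', h2'⟩ := h'
  set m : ℕ := 2 ^ (k' - k).toNat with hm
  have hmk : (2:ℝ)^k' = (2:ℝ)^k * m := by
    rw [hm]
    push_cast
    rw [← zpow_natCast (2:ℝ), Int.toNat_of_nonneg (by omega),
      ← zpow_add₀ (by norm_num : (2:ℝ) ≠ 0)]
    ring_nf
  have hpos := two_zpow_pos k
  have ha : (n:ℝ) < m * (n' + 1) := by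
    have : (2:ℝ)^k * n < (2:ℝ)^k * (m * ((n':ℝ)+1)) := by
      calc (2:ℝ)^k * n ≤ x := h1
        _ < (2:ℝ)^k' * (n'+1) := h2'
        _ = _ := by rw [hmk]; ring
    exact (mul_lt_mul_iff_right₀ hpos).mp this
  have hb : (m:ℝ) * n' < n + 1 := by
    have : (2:ℝ)^k * ((m:ℝ) * n') < (2:ℝ)^k * (n+1) := by
      calc (2:ℝ)^k * ((m:ℝ)*n') = (2:ℝ)^k' * n' := by rw [hmk]; ring
        _ ≤ x := h1'
        _ < _ := h2
    exact (mul_lt_mul_iff_right₀ hpos).mp this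
  have ha' : n + 1 ≤ m * (n' + 1) := by
    have : n < m * (n'+1) := by exact_mod_cast ha
    omega
  have hb' : m * n' ≤ n := by
    have : m * n' < n + 1 := by exact_mod_cast hb
    omega
  intro y hy
  obtain ⟨hy1, hy2⟩ := hy
  constructor
  · calc (2:ℝ)^k' * n' = (2:ℝ)^k * ((m:ℝ) * n') := by rw [hmk]; ring
      _ ≤ (2:ℝ)^k * n := by
          apply mul_le_mul_of_nonneg_left _ hpos.le
          exact_mod_cast hb'
      _ ≤ y := hy1
  · calc y < (2:ℝ)^k * (n+1) := hy2
      _ ≤ (2:ℝ)^k * ((m:ℝ) * ((n':ℝ)+1)) := by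
          apply mul_le_mul_of_nonneg_left _ hpos.le
          exact_mod_cast ha'
      _ = (2:ℝ)^k' * (n'+1) := by rw [hmk]; ring

lemma dy_scale_le {k k' : ℤ} {n n' : ℕ}
    (h : Ico ((2:ℝ)^k * n) ((2:ℝ)^k * (n+1)) ⊆ Ico ((2:ℝ)^k' * n') ((2:ℝ)^k' * (n'+1))) :
    k ≤ k' := by
  rw [Ico_subset_Ico_iff (dyadic_lt k n)] at h
  have h2 : (2:ℝ)^k ≤ (2:ℝ)^k' := by nlinarith [h.1, h.2]
  by_contra hlt
  have : (2:ℝ)^k' < (2:ℝ)^k :=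
    zpow_lt_zpow_right₀ (by norm_num : (1:ℝ) < 2) (by omega)
  linarith

lemma dy_same {k : ℤ} {n n' : ℕ} {x : ℝ}
    (h : x ∈ Ico ((2:ℝ)^k * n) ((2:ℝ)^k * (n+1)))
    (h' : x ∈ Ico ((2:ℝ)^k * n') ((2:ℝ)^k * (n'+1))) : n = n' := by
  have hpos := two_zpow_pos k
  have h1 : (n:ℝ) < (n':ℝ) + 1 :=
    (mul_lt_mul_iff_right₀ hpos).mp (lt_of_le_of_lt h.1 h'.2)
  have h2 : (n':ℝ) < (n:ℝ) + 1 :=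
    (mul_lt_mul_iff_right₀ hpos).mp (lt_of_le_of_lt h'.1 h.2)
  have h1' : n < n' + 1 := by exact_mod_cast h1
  have h2' : n' < n + 1 := by exact_mod_cast h2
  omega

lemma dy_eq {k k' : ℤ} {n n' : ℕ}
    (h : Ico ((2:ℝ)^k * (n:ℝ)) ((2:ℝ)^k * (n+1)) = Ico ((2:ℝ)^k' * n') ((2:ℝ)^k' * (n'+1))) :
    k = k' ∧ n = n' := by
  have hk : k = k' :=
    le_antisymm (dy_scale_le h.subset) (dy_scale_le h.symm.subset)
  subst hk
  exact ⟨rfl, dy_same (left_mem_dy k n) (h ▸ left_mem_dy k n)⟩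

lemma dy_mem_floor {x : ℝ} (hx : 0 ≤ x) (k : ℤ) :
    x ∈ Ico ((2:ℝ)^k * ((⌊x / 2^k⌋.toNat : ℕ) : ℝ))
      ((2:ℝ)^k * (((⌊x / 2^k⌋.toNat : ℕ) : ℝ)+1)) := by
  have hpos := two_zpow_pos k
  have h0 : (0:ℤ) ≤ ⌊x / 2^k⌋ := Int.floor_nonneg.mpr (div_nonneg hx hpos.le)
  have hc : ((⌊x / 2^k⌋.toNat : ℕ) : ℝ) = (⌊x / 2^k⌋ : ℝ) := by
    exact_mod_cast Int.toNat_of_nonneg h0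
  rw [hc]
  constructor
  · rw [mul_comm]
    exact (le_div_iff₀ hpos).mp (Int.floor_le _)
  · have := Int.lt_floor_add_one (x / 2^k)
    calc x = (x / 2^k) * 2^k := by field_simp
      _ < ((⌊x / 2^k⌋ : ℝ)+1) * 2^k := mul_lt_mul_of_pos_right this hpos
      _ = _ := by ring


lemma dilate_Ico (L : ℕ) (A : Set ℝ) (a b : ℝ) :
    dilate L (A ×ˢ Ico a b) = A ×ˢ Ico ((2:ℝ)^L * a) ((2:ℝ)^L * b) := by
  have hpos : (0:ℝ) < 2^L := by positivity
  unfold dilate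
  ext ⟨x, y⟩
  constructor
  · rintro ⟨⟨u, v⟩, ⟨hu, hv1, hv2⟩, heq⟩
    obtain ⟨rfl, rfl⟩ : u = x ∧ (2:ℝ)^L * v = y := by
      simpa [Prod.ext_iff] using heq
    exact ⟨hu, mul_le_mul_of_nonneg_left hv1 hpos.le, mul_lt_mul_of_pos_left hv2 hpos⟩
  · rintro ⟨hx, hy1, hy2⟩
    refine ⟨(x, y / 2^L), ⟨hx, ?_, ?_⟩, ?_⟩
    · exact (le_div_iff₀ hpos).mpr (by rw [mul_comm]; exact hy1)
    · exact (div_lt_iff₀ hpos).mpr (by rw [mul_comm]; exact hy2)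
    · show (x, (2:ℝ)^L * (y / 2^L)) = (x, y)
      rw [mul_div_cancel₀ _ hpos.ne']

lemma dilate_toSet (L : ℕ) (P : Bitile) :
    dilate L P.toSet = P.timeI ×ˢ
      Ico ((2:ℝ)^((L:ℤ)+(1-P.k)) * P.l) ((2:ℝ)^((L:ℤ)+(1-P.k)) * (P.l+1)) := by
  have hE : (2:ℝ)^((L:ℤ)+(1-P.k)) = 2^(L:ℕ) * 2^(1-P.k) := by
    rw [zpow_add₀ (by norm_num : (2:ℝ) ≠ 0), zpow_natCast]
  show dilate L (P.timeI ×ˢ P.freqI) = _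
  unfold Bitile.freqI
  rw [dilate_Ico, hE]
  ring_nf

lemma mem_dilate_freq {ξ : ℝ} {k : ℤ} {l : ℕ} (L : ℕ)
    (h : ξ ∈ Ico ((2:ℝ)^k * l) ((2:ℝ)^k * (l+1))) :
    (2:ℝ)^L * ξ ∈ Ico ((2:ℝ)^((L:ℤ)+k) * l) ((2:ℝ)^((L:ℤ)+k) * (l+1)) := by
  have hE : (2:ℝ)^((L:ℤ)+k) = 2^(L:ℕ) * 2^k := by
    rw [zpow_add₀ (by norm_num : (2:ℝ) ≠ 0), zpow_natCast]
  have hpos : (0:ℝ) < 2^L := by positivity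
  constructor
  · rw [hE, mul_assoc]
    exact mul_le_mul_of_nonneg_left h.1 hpos.le
  · rw [hE, mul_assoc]
    exact mul_lt_mul_of_pos_left h.2 hpos

lemma mem_enlarged_iff {L : ℕ} {T : Tree} {ξ : ℝ} {P : Bitile} :
    P ∈ T.enlarged L ξ ↔ (2:ℝ)^L * ξ ∈ P.freqI ∧
      ∃ P' ∈ T.carrier, P.timeI ⊆ P'.timeI ∧
        P.freqI ⊆ Ico ((2:ℝ)^((L:ℤ)+(1-P'.k)) * P'.l) ((2:ℝ)^((L:ℤ)+(1-P'.k)) * (P'.l+1)) := by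
  constructor
  · rintro ⟨h1, P', hP', hsub⟩
    refine ⟨h1, P', hP', ?_⟩
    rw [dilate_toSet] at hsub
    rcases Set.prod_subset_prod_iff.mp hsub with ⟨ha, hb⟩ | h | h
    · exact ⟨ha, hb⟩
    · exact absurd h (Set.nonempty_Ico.mpr (dyadic_lt P.k P.n)).ne_empty
    · exact absurd h (Set.nonempty_Ico.mpr (dyadic_lt (1-P.k) P.l)).ne_empty
  · rintro ⟨h1, P', hP', ht, hf⟩
    exact ⟨h1, P', hP', by rw [dilate_toSet]; exact Set.prod_mono ht hf⟩

/-- Properties of the enlarged tree `T^{(L)}`: convexity, unique maximal element (the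
bitile of `T^{(L)}` with time interval `I_T`), and independence of the choice of `ξ ∈ ω_T`. -/
theorem enlarged_tree_properties :
    ∀ L : ℕ, 1 ≤ L → ∀ T : Tree,
      (IsConvex T.carrier → ∀ ξ ∈ T.top.freqI,
        IsConvex (T.enlarged L ξ) ∧
        (∃! P : Bitile, P ∈ T.enlarged L ξ ∧ P.timeI = T.top.timeI) ∧
        (∀ P : Bitile, P ∈ T.enlarged L ξ → P.timeI = T.top.timeI →
          ∀ Q ∈ T.enlarged L ξ, bitileLE Q P)) ∧
      (∀ ξ ∈ T.top.freqI, ∀ ξ' ∈ T.top.freqI,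
        T.enlargedSet L ξ = T.enlargedSet L ξ') := by
  intro L hL T
  have key : ∀ ξ ∈ T.top.freqI,
      T.enlargedSet L ξ = ⋃ P' ∈ T.carrier, dilate L P'.toSet := by
    intro ξ hξ
    apply subset_antisymm
    · refine Set.iUnion₂_subset fun P hP => ?_
      obtain ⟨h1, P', hP', hsub⟩ := hP
      exact hsub.trans (Set.subset_biUnion_of_mem (u := fun P' => dilate L P'.toSet) hP')
    · refine Set.iUnion₂_subset fun P' hP' => ?_
      rintro ⟨x, y⟩ hxy
      rw [dilate_toSet] at hxy
      obtain ⟨hx, hy⟩ := hxy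
      have hx0 : 0 ≤ x := dy_nonneg hx
      obtain ⟨P, hPk, hPl, hxP⟩ :
          ∃ P : Bitile, P.k = P'.k - L ∧ P.l = P'.l ∧ x ∈ P.timeI :=
        ⟨⟨P'.k - L, (⌊x / 2^(P'.k - (L:ℤ))⌋).toNat, P'.l⟩, rfl, rfl,
          dy_mem_floor hx0 (P'.k - L)⟩
      have hPfreq : P.freqI =
          Ico ((2:ℝ)^((L:ℤ)+(1-P'.k)) * P'.l) ((2:ℝ)^((L:ℤ)+(1-P'.k)) * (P'.l+1)) := by
        show Ico ((2:ℝ)^(1-P.k) * P.l) ((2:ℝ)^(1-P.k) * (P.l+1)) = _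
        rw [hPl, show (1:ℤ)-P.k = (L:ℤ)+(1-P'.k) by omega]
      have hPmem : P ∈ T.enlarged L ξ := by
        refine ⟨?_, P', hP', ?_⟩
        · rw [hPfreq]
          exact mem_dilate_freq L ((T.le_top P' hP').2 hξ)
        · rw [dilate_toSet]
          refine Set.prod_mono ?_ (by rw [hPfreq])
          exact dy_subset (by omega) hxP hx
      exact Set.mem_biUnion hPmem ⟨hxP, by rw [hPfreq]; exact hy⟩
  constructor
  · intro hconv ξ hξ
    have hξ0 : 0 ≤ ξ := dy_nonneg hξ
    have hLξ0 : (0:ℝ) ≤ 2^L * ξ := by positivity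
    -- the maximal bitile
    obtain ⟨Pm, hPmk, hPmn, hPmfreq⟩ :
        ∃ Pm : Bitile, Pm.k = T.top.k ∧ Pm.n = T.top.n ∧ (2:ℝ)^L * ξ ∈ Pm.freqI :=
      ⟨⟨T.top.k, T.top.n, (⌊((2:ℝ)^L * ξ) / 2^(1 - T.top.k)⌋).toNat⟩, rfl, rfl,
        dy_mem_floor hLξ0 (1 - T.top.k)⟩
    have hPmtime : Pm.timeI = T.top.timeI := by
      show Ico ((2:ℝ)^Pm.k * Pm.n) ((2:ℝ)^Pm.k * (Pm.n+1)) = _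
      rw [hPmk, hPmn]; rfl
    have hPmmem : Pm ∈ T.enlarged L ξ := by
      refine mem_enlarged_iff.mpr ⟨hPmfreq, T.top, T.top_mem, ?_, ?_⟩
      · rw [hPmtime]
      · exact dy_subset (by omega) hPmfreq (mem_dilate_freq L hξ)
    -- maximality
    have hmax : ∀ P : Bitile, P ∈ T.enlarged L ξ → P.timeI = T.top.timeI →
        ∀ Q ∈ T.enlarged L ξ, bitileLE Q P := by
      intro P hP htime Q hQ
      obtain ⟨hPk, hPn⟩ := dy_eq htime
      obtain ⟨hPf, -⟩ := hP
      obtain ⟨hQf, Q', hQ', hQt, hQq⟩ := mem_enlarged_iff.mp hQ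
      have hQk : Q.k ≤ T.top.k :=
        le_trans (dy_scale_le hQt) (dy_scale_le (T.le_top Q' hQ').1)
      refine ⟨?_, ?_⟩
      · rw [htime]; exact hQt.trans (T.le_top Q' hQ').1
      · exact dy_subset (by omega) hPf hQf
    refine ⟨?_, ⟨Pm, ⟨hPmmem, hPmtime⟩, ?_⟩, hmax⟩
    · -- convexity
      intro P1 P2 P hP1 hP2 h1 h2
      obtain ⟨hf1, P1', hP1', ht1, hq1⟩ := mem_enlarged_iff.mp hP1
      obtain ⟨hf2, P2', hP2', ht2, hq2⟩ := mem_enlarged_iff.mp hP2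
      obtain ⟨⟨h1t, h1f⟩, hne1⟩ := h1
      obtain ⟨⟨h2t, h2f⟩, hne2⟩ := h2
      have hPf : (2:ℝ)^L * ξ ∈ P.freqI := h2f hf2
      have hk1 : P1.k ≤ P.k := dy_scale_le h1t
      have hk1' : P1.k ≤ P1'.k := dy_scale_le ht1
      have hkP2' : P.k ≤ P2'.k := dy_scale_le (h2t.trans ht2)
      have hscale1 : P1'.k ≤ P1.k + L := by
        have := dy_scale_le hq1
        omega
      have hξ1 : ξ ∈ P1'.freqI := (T.le_top P1' hP1').2 hξ
      have hξ2 : ξ ∈ P2'.freqI := (T.le_top P2' hP2').2 hξ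
      rcases le_or_gt P1'.k P2'.k with hcase | hcase
      · set k' : ℤ := max P1'.k P.k with hk'def
        have hk'a : P1'.k ≤ k' := le_max_left _ _
        have hk'b : P.k ≤ k' := le_max_right _ _
        have hk'c : k' ≤ P2'.k := max_le hcase hkP2'
        have hk'd : k' ≤ P.k + L := max_le (by omega) (by omega)
        obtain ⟨Q, hQk, hx₀Q, hξQ⟩ :
            ∃ Q : Bitile, Q.k = k' ∧ (2:ℝ)^P.k * P.n ∈ Q.timeI ∧ ξ ∈ Q.freqI :=
          ⟨⟨k', (⌊((2:ℝ)^P.k * P.n) / 2^k'⌋).toNat, (⌊ξ / 2^(1-k')⌋).toNat⟩, rfl,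
            dy_mem_floor (by positivity) k', dy_mem_floor hξ0 (1-k')⟩
        have hx₀P : (2:ℝ)^P.k * P.n ∈ P.timeI := left_mem_dy P.k P.n
        have hPQ : P.timeI ⊆ Q.timeI := dy_subset (by omega) hx₀P hx₀Q
        have hx₁ : (2:ℝ)^P1.k * P1.n ∈ P1.timeI := left_mem_dy P1.k P1.n
        have hQ1 : P1'.timeI ⊆ Q.timeI := dy_subset (by omega) (ht1 hx₁) (hPQ (h1t hx₁))
        have hQ2 : Q.timeI ⊆ P2'.timeI := dy_subset (by omega) hx₀Q (ht2 (h2t hx₀P))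
        have hQf1 : Q.freqI ⊆ P1'.freqI := dy_subset (by omega) hξQ hξ1
        have hQf2 : P2'.freqI ⊆ Q.freqI := dy_subset (by omega) hξ2 hξQ
        have hQmem : Q ∈ T.carrier := by
          by_cases e1 : Q = P1'
          · rw [e1]; exact hP1'
          by_cases e2 : Q = P2'
          · rw [e2]; exact hP2'
          exact hconv P1' P2' Q hP1' hP2' ⟨⟨hQ1, hQf1⟩, Ne.symm e1⟩ ⟨⟨hQ2, hQf2⟩, e2⟩
        refine mem_enlarged_iff.mpr ⟨hPf, Q, hQmem, hPQ, ?_⟩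
        exact dy_subset (by omega) hPf (mem_dilate_freq L hξQ)
      · refine mem_enlarged_iff.mpr ⟨hPf, P2', hP2', h2t.trans ht2, ?_⟩
        exact dy_subset (by omega) hPf (mem_dilate_freq L hξ2)
    · -- uniqueness
      rintro P ⟨hP, htime⟩
      obtain ⟨hPk, hPn⟩ := dy_eq htime
      obtain ⟨hPf, -⟩ := hP
      obtain ⟨pk, pn, pl⟩ := P
      obtain ⟨mk, mn, ml⟩ := Pm
      simp only [Bitile.mk.injEq] at hPmk hPmn hPk hPn ⊢
      subst hPk hPn hPmk hPmn
      refine ⟨rfl, rfl, ?_⟩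
      exact dy_same hPf hPmfreq
  · intro ξ hξ ξ' hξ'
    rw [key ξ hξ, key ξ' hξ']


end Quartile
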